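/- Let ≤ be a reflexive, transitive relation on a set S. Then there is a reflexive, antisymmetric relation ≼ on S such that: (1) if x, y ∈ S and x ≤ y, then x ≼ y or y ≼ x; (2) every non-empty subset A of S has a ≼-minimal element, i.e. there is x ∈ A such that y ⋠ x for all y ∈ A \ {x}; (3) if A ⊆ S and A ⊆ {x ∈ S : x ≼ s} for some s ∈ S, then A ⊆ {x ∈ S : x ≤ s'} for some s' ∈ S. -/

import Mathlib

/-- If `r` is a reflexive transitive relation on a set `S`, then there is a
reflexive antisymmetric relation `r'` on `S` such that: (1) `x r y` implies
`x r' y` or `y r' x`; (2) every nonempty subset of `S` has an `r'`-minimal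
element; (3) every subset of `S` with an `r'`-upper bound has an `r`-upper bound. -/
theorem exists_reflexive_antisymmetric_relation {S : Type*} (r : S → S → Prop)
    (hrefl : Reflexive r) (htrans : Transitive r) :
    ∃ r' : S → S → Prop,
      Reflexive r' ∧
      (∀ x y : S, r' x y → r' y x → x = y) ∧
      (∀ x y : S, r x y → r' x y ∨ r' y x) ∧
      (∀ A : Set S, A.Nonempty → ∃ x ∈ A, ∀ y ∈ A, y ≠ x → ¬ r' y x) ∧
      (∀ A : Set S, (∃ s : S, ∀ x ∈ A, r' x s) → ∃ s' : S, ∀ x ∈ A, r x s') := by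
  classical
  set W : S → S → Prop := WellOrderingRel with hW
  haveI hwo : IsWellOrder S W := WellOrderingRel.isWellOrder
  have hwf : WellFounded W := hwo.wf
  have hirr : ∀ a : S, ¬ W a a := fun a => irrefl_of W a
  have htri : ∀ a b : S, W a b ∨ a = b ∨ W b a := fun a b => trichotomous_of W a b
  have hWtrans : ∀ {a b c : S}, W a b → W b c → W a c := fun h1 h2 => trans_of W h1 h2
  have hasym : ∀ {a b : S}, W a b → W b a → False := fun h1 h2 => hirr _ (hWtrans h1 h2)
  set g : S → S := fun x => hwf.min {y | r x y} ⟨x, hrefl x⟩ with hg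
  have hgr : ∀ x, r x (g x) := fun x => hwf.min_mem {y | r x y} ⟨x, hrefl x⟩
  have hmono : ∀ x y : S, r x y → ¬ W (g y) (g x) := by
    intro x y hxy
    exact hwf.not_lt_min {z | r x z} (htrans hxy (hgr y))
  refine ⟨fun x y => x = y ∨ (W (g x) (g y) ∧ r x y) ∨ (g x = g y ∧ W x y ∧ (r x y ∨ r y x)),
    fun x => Or.inl rfl, ?_, ?_, ?_, ?_⟩
  · -- antisymmetry
    rintro x y (rfl | ⟨h1, -⟩ | ⟨he1, h1, -⟩) h2
    · rfl
    · rcases h2 with rfl | ⟨h2, -⟩ | ⟨he2, -, -⟩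
      · rfl
      · exact absurd h2 (fun h => hasym h1 h)
      · exact absurd h1 (he2 ▸ hirr _)
    · rcases h2 with rfl | ⟨h2, -⟩ | ⟨-, h2, -⟩
      · rfl
      · exact absurd h2 (he1 ▸ hirr _)
      · exact absurd h2 (fun h => hasym h1 h)
  · -- totality on r-comparable pairs
    intro x y hxy
    rcases htri (g x) (g y) with h | h | h
    · exact Or.inl (Or.inr (Or.inl ⟨h, hxy⟩))
    · rcases htri x y with h' | h' | h'
      · exact Or.inl (Or.inr (Or.inr ⟨h, h', Or.inl hxy⟩))
      · exact Or.inl (Or.inl h')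
      · exact Or.inr (Or.inr (Or.inr ⟨h.symm, h', Or.inr hxy⟩))
    · exact absurd h (hmono x y hxy)
  · -- minimal elements
    intro A hA
    have hB : (g '' A).Nonempty := hA.image g
    set b0 : S := hwf.min (g '' A) hB with hb0
    have hb0mem : b0 ∈ g '' A := hwf.min_mem _ hB
    have hA0 : {a | a ∈ A ∧ g a = b0}.Nonempty := by
      obtain ⟨a, ha, hga⟩ := hb0mem
      exact ⟨a, ha, hga⟩
    set x : S := hwf.min {a | a ∈ A ∧ g a = b0} hA0 with hx
    have hxmem : x ∈ A ∧ g x = b0 := hwf.min_mem _ hA0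
    refine ⟨x, hxmem.1, ?_⟩
    rintro y hy hne (h | ⟨h1, -⟩ | ⟨he, h1, -⟩)
    · exact hne h
    · rw [hxmem.2] at h1
      exact hwf.not_lt_min (g '' A) ⟨y, hy, rfl⟩ h1
    · have : y ∈ {a | a ∈ A ∧ g a = b0} := ⟨hy, he.trans hxmem.2⟩
      exact hwf.not_lt_min _ this h1
  · -- upper bounds
    rintro A ⟨s, hs⟩
    refine ⟨g s, fun x hx => ?_⟩
    rcases hs x hx with rfl | ⟨-, h2⟩ | ⟨he, -, (h2 | h2)⟩
    · exact hgr x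
    · exact htrans h2 (hgr s)
    · exact htrans h2 (hgr s)
    · exact he ▸ hgr x
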